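/- Let F ∈ 𝔽_p[[X]] with coefficient sequence (f_n), let N ∈ ℕ, and let A₂ = {f_i·1 : i ≤ N} ∪ {X} ∪ {G_j : 0 ≤ j ≤ N+1} ∪ {X·G_j : 0 ≤ j ≤ N+1} where G_j(X) = ∑_{i≥j} f_i X^{i-j}. Then every 𝔽_p[X]-pseudo-morphism φ : A₂ → 𝔽_p[[X]] satisfies φ(F) = ∑_{i=0}^N f_i X^i + X^{N+1} φ(G_{N+1}), hence ‖F - φ(F)‖ ≤ p^{-(N+1)}. -/

import Mathlib

/-- An `𝔽_p[X]`-pseudo-morphism on a subset `A` of `𝔽_p⟦X⟧`: it fixes every element of `A`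
that is (the power series of) a polynomial, and preserves sums and products within `A`. -/
def IsPolyPseudoMorphism (p : ℕ) [Fact p.Prime] (A : Set (PowerSeries (ZMod p)))
    (φ : PowerSeries (ZMod p) → PowerSeries (ZMod p)) : Prop :=
  (∀ a ∈ A, (∃ q : Polynomial (ZMod p),
      Polynomial.coeToPowerSeries.ringHom q = a) → φ a = a) ∧
  (∀ a b : PowerSeries (ZMod p), a ∈ A → b ∈ A → a + b ∈ A → φ (a + b) = φ a + φ b) ∧
  (∀ a b : PowerSeries (ZMod p), a ∈ A → b ∈ A → a * b ∈ A → φ (a * b) = φ a * φ b)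

/-- The `j`-th shift `G_j(X) = ∑_{i ≥ j} f_i X^{i-j}` of a power series. -/
noncomputable def shiftSeries (p : ℕ) (F : PowerSeries (ZMod p)) (j : ℕ) :
    PowerSeries (ZMod p) :=
  PowerSeries.mk fun n => PowerSeries.coeff (R := ZMod p) (n + j) F

lemma shiftSeries_zero (p : ℕ) (F : PowerSeries (ZMod p)) : shiftSeries p F 0 = F := by
  ext n; simp [shiftSeries]

lemma shiftSeries_succ (p : ℕ) (F : PowerSeries (ZMod p)) (j : ℕ) :
    shiftSeries p F j =
      PowerSeries.C (R := ZMod p) (PowerSeries.coeff (R := ZMod p) j F) +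
        PowerSeries.X * shiftSeries p F (j + 1) := by
  ext n
  cases n with
  | zero => simp [shiftSeries]
  | succ m =>
      simp [shiftSeries, PowerSeries.coeff_succ_X_mul, PowerSeries.coeff_C]
      ring_nf

theorem pseudoMorphism_approximates (p : ℕ) [Fact p.Prime] (F : PowerSeries (ZMod p))
    (N : ℕ)
    (A₂ : Set (PowerSeries (ZMod p)))
    (hA₂ : A₂ =
      {g | ∃ i ≤ N, g = PowerSeries.C (R := ZMod p) (PowerSeries.coeff (R := ZMod p) i F)} ∪
      {PowerSeries.X} ∪
      {g | ∃ j ≤ N + 1, g = shiftSeries p F j} ∪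
      {g | ∃ j ≤ N + 1, g = PowerSeries.X * shiftSeries p F j})
    (φ : PowerSeries (ZMod p) → PowerSeries (ZMod p))
    (hφ : IsPolyPseudoMorphism p A₂ φ) :
    φ F = (∑ i ∈ Finset.range (N + 1),
        PowerSeries.C (R := ZMod p) (PowerSeries.coeff (R := ZMod p) i F) * PowerSeries.X ^ i) +
      PowerSeries.X ^ (N + 1) * φ (shiftSeries p F (N + 1)) ∧
    ((N + 1 : ℕ∞) ≤ (F - φ F).order) := by
  obtain ⟨hfix, hadd, hmul⟩ := hφ
  -- memberships
  have hC : ∀ i ≤ N, (PowerSeries.C (R := ZMod p) (PowerSeries.coeff (R := ZMod p) i F)) ∈ A₂ := by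
    intro i hi; rw [hA₂]; left; left; left; exact ⟨i, hi, rfl⟩
  have hX : (PowerSeries.X : PowerSeries (ZMod p)) ∈ A₂ := by
    rw [hA₂]; left; left; right; rfl
  have hG : ∀ j ≤ N + 1, shiftSeries p F j ∈ A₂ := by
    intro j hj; rw [hA₂]; left; right; exact ⟨j, hj, rfl⟩
  have hXG : ∀ j ≤ N + 1, PowerSeries.X * shiftSeries p F j ∈ A₂ := by
    intro j hj; rw [hA₂]; right; exact ⟨j, hj, rfl⟩
  -- φ fixes C and X
  have hφC : ∀ i ≤ N, φ (PowerSeries.C (R := ZMod p) (PowerSeries.coeff (R := ZMod p) i F)) =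
      PowerSeries.C (R := ZMod p) (PowerSeries.coeff (R := ZMod p) i F) := by
    intro i hi
    exact hfix _ (hC i hi) ⟨Polynomial.C (PowerSeries.coeff (R := ZMod p) i F), by simp⟩
  have hφX : φ (PowerSeries.X : PowerSeries (ZMod p)) = PowerSeries.X :=
    hfix _ hX ⟨Polynomial.X, by simp⟩
  -- key step
  have hstep : ∀ j ≤ N, φ (shiftSeries p F j) =
      PowerSeries.C (R := ZMod p) (PowerSeries.coeff (R := ZMod p) j F) +
        PowerSeries.X * φ (shiftSeries p F (j + 1)) := by
    intro j hj
    have h1 : φ (shiftSeries p F j) =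
        φ (PowerSeries.C (R := ZMod p) (PowerSeries.coeff (R := ZMod p) j F)) +
          φ (PowerSeries.X * shiftSeries p F (j + 1)) := by
      rw [shiftSeries_succ]
      exact hadd _ _ (hC j hj) (hXG (j + 1) (by omega))
        (by rw [← shiftSeries_succ]; exact hG j (by omega))
    have h2 : φ (PowerSeries.X * shiftSeries p F (j + 1)) =
        PowerSeries.X * φ (shiftSeries p F (j + 1)) := by
      rw [hmul _ _ hX (hG (j + 1) (by omega)) (hXG (j + 1) (by omega)), hφX]
    rw [h1, h2, hφC j hj]
  -- the main recursion, for both φ F and F itself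
  have main : ∀ k ≤ N + 1, φ F = (∑ i ∈ Finset.range k,
      PowerSeries.C (R := ZMod p) (PowerSeries.coeff (R := ZMod p) i F) * PowerSeries.X ^ i) +
      PowerSeries.X ^ k * φ (shiftSeries p F k) := by
    intro k hk
    induction k with
    | zero => simp [shiftSeries_zero]
    | succ m ih =>
        rw [ih (by omega), hstep m (by omega), Finset.sum_range_succ]
        ring
  have mainF : ∀ k, F = (∑ i ∈ Finset.range k,
      PowerSeries.C (R := ZMod p) (PowerSeries.coeff (R := ZMod p) i F) * PowerSeries.X ^ i) +
      PowerSeries.X ^ k * shiftSeries p F k := by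
    intro k
    induction k with
    | zero => simp [shiftSeries_zero]
    | succ m ih =>
        rw [Finset.sum_range_succ]
        conv_lhs => rw [ih]
        rw [shiftSeries_succ p F m]
        ring
  have h1 := main (N + 1) le_rfl
  refine ⟨h1, ?_⟩
  have hdiff : F - φ F = PowerSeries.X ^ (N + 1) *
      (shiftSeries p F (N + 1) - φ (shiftSeries p F (N + 1))) := by
    rw [h1]
    nth_rewrite 1 [mainF (N + 1)]
    ring
  rw [hdiff]
  apply PowerSeries.nat_le_order
  intro i hi
  rw [PowerSeries.coeff_X_pow_mul']
  simp [Nat.not_le_of_lt hi]
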